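/- Let K be a number field of degree d and fix integers n, m ≥ 1 and a Euclidean norm ‖·‖ on M_{n×m}(K_ℝ). There exists a constant c > 0, depending on K, the norm, n, m but independent of k and of the prime ideal P, such that: whenever x ∈ M_{n×m}(O_K) has rank(x) = k ≥ 1 over K and P is a prime ideal of O_K such that the reduction of x modulo P has rank strictly less than k over k_P, then ‖x‖ ≥ c·N(P)^{1/(k·d)}. -/

import Mathlib

noncomputable section
open NumberField NumberField.InfinitePlace MeasureTheory Module Submodule Matrix
attribute [local instance] Classical.propDecidable
set_option synthInstance.maxHeartbeats 1000000
set_option maxHeartbeats 1000000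

/-! Setup: the space `K_ℝ = K ⊗ ℝ`, realized as the mixed space `ℝ^{r₁} × ℂ^{r₂}`, together
with the Euclidean structure given by `‖x‖² = |Δ_K|^{-2/d}·Tr(x·x̄)`, extended coordinatewise
to vectors and matrices over `K_ℝ`. This Euclidean structure is realized through explicit
linear coordinates with values in `EuclideanSpace ℝ _`. -/

namespace Paper

variable (K : Type) [Field K] [NumberField K]

/-- The mixed space `K ⊗ ℝ ≅ ℝ^{r₁} × ℂ^{r₂}`. -/
abbrev MS : Type := NumberField.mixedEmbedding.mixedSpace K

/-- Real-coordinate index type for `K_ℝ`: one coordinate for each real place and two for each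
complex place. -/
abbrev RIx : Type := {w : InfinitePlace K // IsReal w} ⊕ ({w : InfinitePlace K // IsComplex w} × Bool)

/-- The scaling factor `|Δ_K|^{-1/d}`. -/
def sK : ℝ := (Int.natAbs (NumberField.discr K) : ℝ) ^ (-(1:ℝ) / (finrank ℚ K))

lemma sK_pos : 0 < sK K := by
  apply Real.rpow_pos_of_pos
  have := NumberField.discr_ne_zero K
  exact_mod_cast Int.natAbs_pos.mpr this

/-- Coordinates of `K_ℝ` realizing the Euclidean structure `‖x‖² = |Δ_K|^{-2/d}·Tr(x·x̄)`:
a real place `v` contributes the coordinate `|Δ_K|^{-1/d}·x_v` and a complex place `w`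
contributes the two coordinates `|Δ_K|^{-1/d}·√2·Re(x_w)` and `|Δ_K|^{-1/d}·√2·Im(x_w)`,
so that the standard Euclidean norm of the coordinates equals the norm above. -/
def eucMap : MS K ≃ₗ[ℝ] EuclideanSpace ℝ (RIx K) where
  toFun x := WithLp.toLp 2 (fun q => Sum.rec (motive := fun _ => ℝ) (fun v => sK K * x.1 v)
    (fun p => (sK K * Real.sqrt 2) * (if p.2 then (x.2 p.1).im else (x.2 p.1).re)) q)
  invFun y := (fun v => (sK K)⁻¹ * y (.inl v),
               fun w => ⟨(sK K * Real.sqrt 2)⁻¹ * y (.inr (w, false)),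
                         (sK K * Real.sqrt 2)⁻¹ * y (.inr (w, true))⟩)
  map_add' x y := by
    ext q
    rcases q with v | ⟨w, b⟩
    · show sK K * (x.1 v + y.1 v) = sK K * x.1 v + sK K * y.1 v
      ring
    · show (sK K * Real.sqrt 2) * (if b then (x.2 w + y.2 w).im else (x.2 w + y.2 w).re) = _
      cases b <;> simp [Complex.add_re, Complex.add_im] <;> ring
  map_smul' c x := by
    ext q
    rcases q with v | ⟨w, b⟩
    · show sK K * (c * x.1 v) = c * (sK K * x.1 v)
      ring
    · show (sK K * Real.sqrt 2) * (if b then (c • x.2 w).im else (c • x.2 w).re) = _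
      cases b <;> simp [Complex.smul_re, Complex.smul_im] <;> ring
  left_inv x := by
    have h1 : sK K ≠ 0 := ne_of_gt (sK_pos K)
    have h2 : sK K * Real.sqrt 2 ≠ 0 := by
      have h3 : (0:ℝ) < Real.sqrt 2 := Real.sqrt_pos.mpr (by norm_num)
      positivity
    refine Prod.ext (funext fun v => ?_) (funext fun w => ?_)
    · show (sK K)⁻¹ * (sK K * x.1 v) = x.1 v
      field_simp
    · show (⟨(sK K * Real.sqrt 2)⁻¹ * ((sK K * Real.sqrt 2) * (x.2 w).re),
            (sK K * Real.sqrt 2)⁻¹ * ((sK K * Real.sqrt 2) * (x.2 w).im)⟩ : ℂ) = x.2 w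
      apply Complex.ext <;> field_simp
  right_inv y := by
    have h1 : sK K ≠ 0 := ne_of_gt (sK_pos K)
    have h2 : sK K * Real.sqrt 2 ≠ 0 := by
      have h3 : (0:ℝ) < Real.sqrt 2 := Real.sqrt_pos.mpr (by norm_num)
      positivity
    ext q
    rcases q with v | ⟨w, b⟩
    · show sK K * ((sK K)⁻¹ * y (.inl v)) = y (.inl v)
      field_simp
    · cases b
      · show (sK K * Real.sqrt 2) * ((sK K * Real.sqrt 2)⁻¹ * y (.inr (w, false))) = _
        field_simp
      · show (sK K * Real.sqrt 2) * ((sK K * Real.sqrt 2)⁻¹ * y (.inr (w, true))) = _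
        field_simp

/-- Euclidean coordinates for vectors in `K_ℝ^m`. -/
def eucVec (m : ℕ) : (Fin m → MS K) ≃ₗ[ℝ] EuclideanSpace ℝ (Fin m × RIx K) where
  toFun x := WithLp.toLp 2 (fun p => eucMap K (x p.1) p.2)
  invFun y := fun i => (eucMap K).symm (WithLp.toLp 2 (fun q => y (i, q)))
  map_add' x y := by
    ext p
    show eucMap K (x p.1 + y p.1) p.2 = eucMap K (x p.1) p.2 + eucMap K (y p.1) p.2
    rw [map_add]; rfl
  map_smul' c x := by
    ext p
    show eucMap K (c • x p.1) p.2 = c * eucMap K (x p.1) p.2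
    rw [_root_.map_smul]; rfl
  left_inv x := by
    funext i
    show (eucMap K).symm (WithLp.toLp 2 (fun q => eucMap K (x i) q)) = x i
    exact (eucMap K).symm_apply_apply (x i)
  right_inv y := by
    ext p
    show eucMap K ((eucMap K).symm (WithLp.toLp 2 (fun q => y (p.1, q)))) p.2 = y p
    rw [(eucMap K).apply_symm_apply]

/-- Euclidean coordinates for matrices in `M_{n×m}(K_ℝ)`. -/
def eucMat (n m : ℕ) :
    Matrix (Fin n) (Fin m) (MS K) ≃ₗ[ℝ] EuclideanSpace ℝ (Fin n × Fin m × RIx K) where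
  toFun A := WithLp.toLp 2 (fun p => eucMap K (A p.1 p.2.1) p.2.2)
  invFun y := Matrix.of fun i j => (eucMap K).symm (WithLp.toLp 2 (fun q => y (i, j, q)))
  map_add' x y := by
    ext p
    show eucMap K (x p.1 p.2.1 + y p.1 p.2.1) p.2.2 = _
    rw [map_add]; rfl
  map_smul' c x := by
    ext p
    show eucMap K (c • x p.1 p.2.1) p.2.2 = c * eucMap K (x p.1 p.2.1) p.2.2
    rw [_root_.map_smul]; rfl
  left_inv x := by
    funext i j
    show (eucMap K).symm (WithLp.toLp 2 (fun q => eucMap K (x i j) q)) = x i j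
    exact (eucMap K).symm_apply_apply (x i j)
  right_inv y := by
    ext p
    show eucMap K ((eucMap K).symm (WithLp.toLp 2 (fun q => y (p.1, p.2.1, q)))) p.2.2 = y p
    rw [(eucMap K).apply_symm_apply]

/-- The Euclidean norm on `K_ℝ^m` (the `l²`-norm from `‖x‖² = |Δ_K|^{-2/d}·Tr(x·x̄)`,
extended coordinatewise). -/
def vnorm {m : ℕ} (x : Fin m → MS K) : ℝ := ‖eucVec K m x‖

/-- The Euclidean norm on `M_{n×m}(K_ℝ)`. -/
def mnorm {n m : ℕ} (A : Matrix (Fin n) (Fin m) (MS K)) : ℝ := ‖eucMat K n m A‖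

/-- The embedding of `M_{n×m}(O_K)` into `M_{n×m}(K_ℝ)`. -/
def embMat {n m : ℕ} (A : Matrix (Fin n) (Fin m) (𝓞 K)) : Matrix (Fin n) (Fin m) (MS K) :=
  A.map (fun a => NumberField.mixedEmbedding K (algebraMap (𝓞 K) K a))

/-- The rank (over `K`) of a matrix with entries in `O_K`. -/
def rankOK {n m : ℕ} (A : Matrix (Fin n) (Fin m) (𝓞 K)) : ℕ :=
  (A.map (algebraMap (𝓞 K) K)).rank

end Paper

/-!
STATEMENT 4 (rank drop): Let K be a number field of degree d and fix integers n, m ≥ 1 and a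
Euclidean norm ‖·‖ on M_{n×m}(K_ℝ). There exists a constant c > 0, depending on K, the norm,
n, m but independent of k and of the prime ideal P, such that: whenever x ∈ M_{n×m}(O_K) has
rank(x) = k ≥ 1 over K and P is a prime ideal of O_K such that the reduction of x modulo P
has rank strictly less than k over k_P, then ‖x‖ ≥ c·N(P)^{1/(k·d)}.

(A Euclidean norm on the finite-dimensional real vector space `M_{n×m}(K_ℝ)` is the norm
`‖Φ ·‖` for some real linear equivalence `Φ` onto a Euclidean space.)
-/

open Paper NumberField

section AuxRank

open Matrix

variable {F : Type*} [Field F] {n m k : ℕ}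

lemma aux_rank_submatrix_le (B : Matrix (Fin n) (Fin m) F) (r : Fin k → Fin n)
    (c : Fin k → Fin m) : (B.submatrix r c).rank ≤ B.rank := by
  classical
  have e1 : ((1 : Matrix (Fin n) (Fin n) F).submatrix r (Equiv.refl (Fin n))) * B
      = B.submatrix r id := by
    rw [Matrix.one_submatrix_mul]
    rfl
  have e2 : (B.submatrix r id) * ((1 : Matrix (Fin m) (Fin m) F).submatrix (Equiv.refl (Fin m)) c)
      = B.submatrix r c := by
    rw [Matrix.mul_submatrix_one]
    rfl
  calc (B.submatrix r c).rank
      = ((B.submatrix r id) * ((1 : Matrix (Fin m) (Fin m) F).submatrix (Equiv.refl (Fin m)) c)).rank := by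
        rw [e2]
    _ ≤ (B.submatrix r id).rank := Matrix.rank_mul_le_left _ _
    _ = (((1 : Matrix (Fin n) (Fin n) F).submatrix r (Equiv.refl (Fin n))) * B).rank := by rw [e1]
    _ ≤ B.rank := Matrix.rank_mul_le_right _ _

lemma aux_le_rank (B : Matrix (Fin n) (Fin m) F) (r : Fin k → Fin n) (c : Fin k → Fin m)
    (h : (B.submatrix r c).det ≠ 0) : k ≤ B.rank := by
  classical
  have hu : IsUnit (B.submatrix r c) :=
    (Matrix.isUnit_iff_isUnit_det _).mpr (isUnit_iff_ne_zero.mpr h)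
  have hr := Matrix.rank_of_isUnit _ hu
  calc k = (B.submatrix r c).rank := by rw [hr, Fintype.card_fin]
    _ ≤ B.rank := aux_rank_submatrix_le B r c

lemma aux_exists_rows (B : Matrix (Fin n) (Fin m) F) (hk : B.rank = k) :
    ∃ r : Fin k → Fin n, LinearIndependent F (fun i => B (r i)) := by
  classical
  have hspan : Module.finrank F (Submodule.span F (Set.range B)) = k := by
    exact (Matrix.rank_eq_finrank_span_row B).symm.trans hk
  obtain ⟨b, hbsub, hbspan, hbli⟩ := exists_linearIndependent F (Set.range B)
  have hbfin : b.Finite := (Set.finite_range B).subset hbsub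
  haveI := hbfin.fintype
  have hcard : Fintype.card b = k := by
    have h1 := finrank_span_eq_card hbli
    rw [Subtype.range_coe] at h1
    rw [← h1, hbspan, hspan]
  let e : Fin k ≃ b := (Fintype.equivFinOfCardEq hcard).symm
  have hsel : ∀ v : b, ∃ i, B i = (v : Fin m → F) := fun v => hbsub v.2
  choose g hg using hsel
  refine ⟨fun i => g (e i), ?_⟩
  have heq : (fun i => B (g (e i))) = (fun v : b => (v : Fin m → F)) ∘ e := by
    funext i
    simp [hg]
  rw [heq]
  exact hbli.comp e e.injective

lemma aux_exists_minor (B : Matrix (Fin n) (Fin m) F) (hk : B.rank = k) :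
    ∃ (r : Fin k → Fin n) (c : Fin k → Fin m), (B.submatrix r c).det ≠ 0 := by
  classical
  obtain ⟨r, hr⟩ := aux_exists_rows B hk
  have h1 : (B.submatrix r id).rank = k := by
    have h2 : LinearIndependent F (fun i => (B.submatrix r id) i) := hr
    rw [LinearIndependent.rank_matrix (M := B.submatrix r id) h2, Fintype.card_fin]
  have h2 : ((B.submatrix r id)ᵀ).rank = k := by rw [Matrix.rank_transpose, h1]
  obtain ⟨c, hc⟩ := aux_exists_rows _ h2
  refine ⟨r, c, ?_⟩
  have hc' : LinearIndependent F (fun i => ((B.submatrix r c)ᵀ) i) := hc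
  have hu : IsUnit ((B.submatrix r c)ᵀ) := Matrix.linearIndependent_rows_iff_isUnit.mp hc'
  have hu2 : IsUnit ((B.submatrix r c)ᵀ).det := (Matrix.isUnit_iff_isUnit_det _).mp hu
  rw [Matrix.det_transpose] at hu2
  exact hu2.ne_zero

end AuxRank

section AuxDet

lemma aux_det_bound {K : Type*} [Field K] {k : ℕ} (v : AbsoluteValue K ℝ)
    (S : Matrix (Fin k) (Fin k) K) {M : ℝ} (hM : 0 ≤ M) (h : ∀ i j, v (S i j) ≤ M) :
    v S.det ≤ (Nat.factorial k : ℝ) * M ^ k := by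
  classical
  rw [Matrix.det_apply]
  refine le_trans (v.sum_le _ _) ?_
  have hterm : ∀ σ : Equiv.Perm (Fin k), v (Equiv.Perm.sign σ • ∏ i, S (σ i) i) ≤ M ^ k := by
    intro σ
    have hv : v (Equiv.Perm.sign σ • ∏ i, S (σ i) i) = v (∏ i, S (σ i) i) := by
      rcases Int.units_eq_one_or (Equiv.Perm.sign σ) with hs | hs <;> rw [hs]
      · rw [one_smul]
      · rw [Units.smul_def, Units.val_neg, Units.val_one, neg_smul, one_smul, v.map_neg]
    rw [hv]
    refine le_trans (le_of_eq (v.map_prod _ _)) ?_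
    calc ∏ i, v (S (σ i) i) ≤ ∏ _i : Fin k, M :=
          Finset.prod_le_prod (fun i _ => v.nonneg _) (fun i _ => h _ _)
      _ = M ^ k := by rw [Finset.prod_const, Finset.card_univ, Fintype.card_fin]
  refine le_trans (Finset.sum_le_sum fun σ _ => hterm σ) ?_
  rw [Finset.sum_const, Finset.card_univ, Fintype.card_perm, Fintype.card_fin, nsmul_eq_mul]

end AuxDet

theorem rank_drop_norm_bound (K : Type) [Field K] [NumberField K]
    (n m : ℕ) (hn : 1 ≤ n) (hm : 1 ≤ m)
    (Φ : Matrix (Fin n) (Fin m) (MS K) ≃ₗ[ℝ] EuclideanSpace ℝ (Fin n × Fin m × RIx K)) :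
    ∃ c : ℝ, 0 < c ∧
      ∀ k : ℕ, 1 ≤ k →
        ∀ P : Ideal (𝓞 K), P.IsPrime → P ≠ ⊥ →
          ∀ x : Matrix (Fin n) (Fin m) (𝓞 K),
            (x.map (algebraMap (𝓞 K) K)).rank = k →
            (x.map (Ideal.Quotient.mk P)).rank < k →
            c * (Nat.card (𝓞 K ⧸ P) : ℝ) ^ ((1 : ℝ) / (k * Module.finrank ℚ K))
              ≤ ‖Φ (embMat K x)‖ := by
  classical
  -- evaluation maps as continuous linear maps on the Euclidean space
  let L : Fin n → Fin m → (EuclideanSpace ℝ (Fin n × Fin m × RIx K) →L[ℝ] MS K) := fun i j =>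
    LinearMap.toContinuousLinearMap
      ((LinearMap.proj j).comp ((LinearMap.proj i).comp (Φ.symm.toLinearMap)))
  set C : ℝ := 1 + ∑ i : Fin n, ∑ j : Fin m, ‖L i j‖ with hC
  have hsum_nonneg : (0:ℝ) ≤ ∑ i : Fin n, ∑ j : Fin m, ‖L i j‖ :=
    Finset.sum_nonneg fun i _ => Finset.sum_nonneg fun j _ => norm_nonneg _
  have hCpos : 0 < C := by
    rw [hC]; linarith
  have hL : ∀ (A : Matrix (Fin n) (Fin m) (MS K)) (i : Fin n) (j : Fin m),
      ‖A i j‖ ≤ C * ‖Φ A‖ := by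
    intro A i j
    have h1 : A i j = L i j (Φ A) := by
      simp only [L, LinearMap.coe_toContinuousLinearMap', LinearMap.coe_comp,
        Function.comp_apply, LinearMap.proj_apply, LinearEquiv.coe_coe]
      exact congrFun (congrFun (Φ.symm_apply_apply A).symm i) j
    rw [h1]
    refine le_trans ((L i j).le_opNorm _) ?_
    refine mul_le_mul_of_nonneg_right ?_ (norm_nonneg _)
    rw [hC]
    have h2 : ‖L i j‖ ≤ ∑ i' : Fin n, ∑ j' : Fin m, ‖L i' j'‖ := by
      refine le_trans (Finset.single_le_sum (f := fun j' => ‖L i j'‖)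
        (fun _ _ => norm_nonneg _) (Finset.mem_univ j)) ?_
      exact Finset.single_le_sum (f := fun i' => ∑ j' : Fin m, ‖L i' j'‖)
        (fun i' _ => Finset.sum_nonneg fun _ _ => norm_nonneg _) (Finset.mem_univ i)
    linarith
  refine ⟨((n.factorial : ℝ) * C)⁻¹, by positivity, ?_⟩
  intro k hk P hP hPbot x hrank hred
  haveI : P.IsMaximal := Ideal.IsPrime.isMaximal hP hPbot
  letI : Field (𝓞 K ⧸ P) := Ideal.Quotient.field P
  set y : EuclideanSpace ℝ (Fin n × Fin m × RIx K) := Φ (embMat K x) with hy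
  set d : ℕ := Module.finrank ℚ K with hd
  have hd1 : 0 < d := Module.finrank_pos
  obtain ⟨r, c, hminor⟩ := aux_exists_minor (x.map (algebraMap (𝓞 K) K)) hrank
  set δ : 𝓞 K := (x.submatrix r c).det with hδ
  have hmapdet : algebraMap (𝓞 K) K δ = ((x.map (algebraMap (𝓞 K) K)).submatrix r c).det := by
    rw [hδ, RingHom.map_det, RingHom.mapMatrix_apply, Matrix.submatrix_map]
  have hδ0 : algebraMap (𝓞 K) K δ ≠ 0 := by rw [hmapdet]; exact hminor
  have hδne : δ ≠ 0 := fun h => hδ0 (by rw [h, map_zero])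
  have hδP : δ ∈ P := by
    by_contra hmem
    have h2 : ((x.map (Ideal.Quotient.mk P)).submatrix r c).det ≠ 0 := by
      rw [Matrix.submatrix_map, ← RingHom.mapMatrix_apply, ← RingHom.map_det]
      simpa [Ideal.Quotient.eq_zero_iff_mem] using hmem
    exact absurd (aux_le_rank _ r c h2) (not_le.mpr hred)
  -- absolute norm comparison
  have hnorm0 : Algebra.norm ℤ δ ≠ 0 := by
    rw [Algebra.norm_ne_zero_iff]
    exact hδne
  have hNdvd : (Ideal.absNorm P : ℤ) ∣ Algebra.norm ℤ δ := Ideal.absNorm_dvd_norm_of_mem hδP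
  have hNleZ : (Ideal.absNorm P : ℤ) ≤ |Algebra.norm ℤ δ| :=
    Int.le_of_dvd (abs_pos.mpr hnorm0) ((dvd_abs _ _).mpr hNdvd)
  have hcard : (Nat.card (𝓞 K ⧸ P) : ℝ) = (Ideal.absNorm P : ℝ) := by
    rw [Ideal.absNorm_apply, Submodule.cardQuot_apply]
  -- per-place bound
  have hwbound : ∀ w : InfinitePlace K,
      w (algebraMap (𝓞 K) K δ) ≤ (Nat.factorial k : ℝ) * (C * ‖y‖) ^ k := by
    intro w
    rw [hmapdet]
    refine aux_det_bound w.1 _ (by positivity) ?_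
    intro i j
    have hent : ((x.map (algebraMap (𝓞 K) K)).submatrix r c) i j
        = algebraMap (𝓞 K) K (x (r i) (c j)) := rfl
    have h1 : w.1 (((x.map (algebraMap (𝓞 K) K)).submatrix r c) i j)
        = mixedEmbedding.normAtPlace w (embMat K x (r i) (c j)) := by
      rw [hent]
      exact (mixedEmbedding.normAtPlace_apply w _).symm
    rw [h1]
    refine le_trans ?_ (hL (embMat K x) (r i) (c j))
    rw [mixedEmbedding.norm_eq_sup'_normAtPlace]
    exact Finset.le_sup'
      (fun w : InfinitePlace K => mixedEmbedding.normAtPlace w (embMat K x (r i) (c j)))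
      (Finset.mem_univ w)
  -- combine over all places
  set T : ℝ := (Nat.factorial k : ℝ) * (C * ‖y‖) ^ k with hT
  have hT0 : 0 ≤ T := by positivity
  have hmain : (Nat.card (𝓞 K ⧸ P) : ℝ) ≤ T ^ d := by
    rw [hcard]
    have hstep : (Ideal.absNorm P : ℝ) ≤ ((|Algebra.norm ℚ (algebraMap (𝓞 K) K δ)| : ℚ) : ℝ) := by
      have h1 : (Ideal.absNorm P : ℚ) ≤ |(Algebra.norm ℤ δ : ℚ)| := by exact_mod_cast hNleZ
      rw [Algebra.coe_norm_int δ] at h1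
      exact_mod_cast h1
    refine le_trans hstep ?_
    rw [← NumberField.InfinitePlace.prod_eq_abs_norm (algebraMap (𝓞 K) K δ)]
    calc ∏ w : InfinitePlace K, w (algebraMap (𝓞 K) K δ) ^ (InfinitePlace.mult w)
        ≤ ∏ w : InfinitePlace K, T ^ (InfinitePlace.mult w) := by
          refine Finset.prod_le_prod (fun w _ => pow_nonneg (apply_nonneg w _) _) ?_
          intro w _
          exact pow_le_pow_left₀ (apply_nonneg w _) (hwbound w) _
      _ = T ^ (∑ w : InfinitePlace K, InfinitePlace.mult w) := by
          rw [Finset.prod_pow_eq_pow_sum]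
      _ = T ^ d := by rw [NumberField.InfinitePlace.sum_mult_eq]
  -- rpow computations
  have hk0 : (0:ℝ) < (k:ℝ) := by exact_mod_cast hk
  have hd0 : (0:ℝ) < (d:ℝ) := by exact_mod_cast hd1
  have hNnn : (0:ℝ) ≤ (Nat.card (𝓞 K ⧸ P) : ℝ) := Nat.cast_nonneg _
  have step1 : (Nat.card (𝓞 K ⧸ P) : ℝ) ^ ((1:ℝ)/((k:ℝ)*(d:ℝ)))
      ≤ (T ^ d) ^ ((1:ℝ)/((k:ℝ)*(d:ℝ))) :=
    Real.rpow_le_rpow hNnn hmain (by positivity)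
  have step2 : (T ^ d) ^ ((1:ℝ)/((k:ℝ)*(d:ℝ))) = T ^ ((1:ℝ)/(k:ℝ)) := by
    rw [← Real.rpow_natCast T d, ← Real.rpow_mul hT0]
    congr 1
    have hkne : (k:ℝ) ≠ 0 := ne_of_gt hk0
    have hdne : (d:ℝ) ≠ 0 := ne_of_gt hd0
    field_simp
  have step3 : T ^ ((1:ℝ)/(k:ℝ))
      = ((Nat.factorial k : ℝ)) ^ ((1:ℝ)/(k:ℝ)) * (C * ‖y‖) := by
    rw [hT, Real.mul_rpow (by positivity) (by positivity),
      ← Real.rpow_natCast (C * ‖y‖) k, ← Real.rpow_mul (by positivity)]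
    rw [mul_one_div, div_self (ne_of_gt hk0), Real.rpow_one]
  have hkn : k ≤ n := by
    have h1 := Matrix.rank_le_card_height (x.map (algebraMap (𝓞 K) K))
    rw [hrank, Fintype.card_fin] at h1
    exact h1
  have step4 : ((Nat.factorial k : ℝ)) ^ ((1:ℝ)/(k:ℝ)) ≤ (Nat.factorial n : ℝ) := by
    have h1 : ((Nat.factorial k : ℝ)) ^ ((1:ℝ)/(k:ℝ)) ≤ ((Nat.factorial k : ℝ)) ^ (1:ℝ) := by
      refine Real.rpow_le_rpow_of_exponent_le ?_ ?_
      · exact_mod_cast Nat.one_le_iff_ne_zero.mpr (Nat.factorial_ne_zero k)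
      · rw [div_le_one hk0]
        exact_mod_cast hk
    rw [Real.rpow_one] at h1
    refine h1.trans ?_
    exact_mod_cast Nat.factorial_le hkn
  have hfinal : (Nat.card (𝓞 K ⧸ P) : ℝ) ^ ((1:ℝ)/((k:ℝ)*(d:ℝ)))
      ≤ (Nat.factorial n : ℝ) * (C * ‖y‖) := by
    calc (Nat.card (𝓞 K ⧸ P) : ℝ) ^ ((1:ℝ)/((k:ℝ)*(d:ℝ)))
        ≤ T ^ ((1:ℝ)/(k:ℝ)) := step1.trans_eq step2
      _ = ((Nat.factorial k : ℝ)) ^ ((1:ℝ)/(k:ℝ)) * (C * ‖y‖) := step3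
      _ ≤ (Nat.factorial n : ℝ) * (C * ‖y‖) :=
          mul_le_mul_of_nonneg_right step4 (by positivity)
  calc ((n.factorial : ℝ) * C)⁻¹ * (Nat.card (𝓞 K ⧸ P) : ℝ) ^ ((1:ℝ)/((k:ℝ)*(d:ℝ)))
      ≤ ((n.factorial : ℝ) * C)⁻¹ * ((Nat.factorial n : ℝ) * (C * ‖y‖)) := by
        refine mul_le_mul_of_nonneg_left hfinal (by positivity)
    _ = ‖y‖ := by
        have hnf : (0:ℝ) < (n.factorial : ℝ) := by positivity
        field_simp
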